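/- arXiv:2206.00395 — 2 statements merged into one kernel-verified Lean document; each statement's English description precedes it below -/
import Mathlib

section
/- Let f : ℝ^d → ℝ be L-smooth and bounded below by f*, and let f, h be twice continuously differentiable and satisfy δ-Hessian similarity with δ > 0. Fix integers K ≥ 1 and T ≥ 1, set η = min(1/L, 1/(192δK)) and a = 36δKη. Given x⁰, m⁰ ∈ ℝ^d, define for t = 1,…,T: m^t = (1−a)m^{t−1} + a(∇f(x^{t−1}) − ∇h(x^{t−1})); y^t_0 = x^{t−1}; y^t_k = y^t_{k−1} − η(∇h(y^t_{k−1}) + m^t) for k = 1,…,K; and x^t = y^t_K. Then (1/(8KT)) Σ_{t=1}^T Σ_{k=0}^{K−1} ‖∇f(y^t_k)‖² ≤ (L + 192δK)·F̃/(KT), where F̃ = f(x⁰) − f* + ‖m⁰ − ∇f(x⁰) + ∇h(x⁰)‖²/(8δ). -/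
open Finset InnerProductSpace
open scoped RealInnerProductSpace

section AUX

variable {E : Type*} [NormedAddCommGroup E] [InnerProductSpace ℝ E] [CompleteSpace E]

lemma grad_inner (f : E → ℝ) (x v : E) : ⟪gradient f x, v⟫ = fderiv ℝ f x v := by
  rw [gradient, toDual_symm_apply]

lemma descent_lemma (f : E → ℝ) (L : ℝ) (hL : 0 ≤ L) (hfd : Differentiable ℝ f)
    (hsmooth : ∀ x y : E, ‖gradient f x - gradient f y‖ ≤ L * ‖x - y‖) (u v : E) :
    f (u + v) ≤ f u + ⟪gradient f u, v⟫ + L / 2 * ‖v‖ ^ 2 := by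
  set c : ℝ := ⟪gradient f u, v⟫ with hc
  set φ : ℝ → ℝ := fun t => f (u + t • v) - t * c - L / 2 * ‖v‖ ^ 2 * t ^ 2 with hφdef
  have hline : ∀ t : ℝ, HasDerivAt (fun t : ℝ => u + t • v) v t := by
    intro t
    simpa using ((hasDerivAt_id t).smul_const v).const_add u
  have hφ : ∀ t : ℝ, HasDerivAt φ
      (⟪gradient f (u + t • v), v⟫ - c - L / 2 * ‖v‖ ^ 2 * (2 * t)) t := by
    intro t
    have h1 : HasDerivAt (fun t : ℝ => f (u + t • v)) (fderiv ℝ f (u + t • v) v) t :=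
      (hfd (u + t • v)).hasFDerivAt.comp_hasDerivAt t (hline t)
    rw [← grad_inner] at h1
    have h2 : HasDerivAt (fun t : ℝ => t * c) c t := by
      simpa using (hasDerivAt_id t).mul_const c
    have h3 : HasDerivAt (fun t : ℝ => L / 2 * ‖v‖ ^ 2 * t ^ 2)
        (L / 2 * ‖v‖ ^ 2 * (2 * t)) t := by
      have := (hasDerivAt_pow 2 t).const_mul (L / 2 * ‖v‖ ^ 2)
      simpa [mul_comm, mul_assoc] using this
    exact (h1.sub h2).sub h3
  have hanti : AntitoneOn φ (Set.Icc (0:ℝ) 1) := by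
    apply antitoneOn_of_deriv_nonpos (convex_Icc 0 1)
    · exact (Continuous.continuousOn (by
        have : ∀ t, DifferentiableAt ℝ φ t := fun t => (hφ t).differentiableAt
        exact (Differentiable.continuous this)))
    · intro t ht
      exact (hφ t).differentiableAt.differentiableWithinAt
    · intro t ht
      rw [interior_Icc] at ht
      rw [(hφ t).deriv]
      have hip : ⟪gradient f (u + t • v) - gradient f u, v⟫ ≤ L * t * ‖v‖ ^ 2 := by
        calc ⟪gradient f (u + t • v) - gradient f u, v⟫
            ≤ ‖gradient f (u + t • v) - gradient f u‖ * ‖v‖ := real_inner_le_norm _ _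
          _ ≤ (L * ‖(u + t • v) - u‖) * ‖v‖ := by
              gcongr; exact hsmooth _ _
          _ = L * t * ‖v‖ ^ 2 := by
              rw [add_sub_cancel_left, norm_smul, Real.norm_eq_abs,
                abs_of_pos ht.1]; ring
      have : ⟪gradient f (u + t • v), v⟫ - c = ⟪gradient f (u + t • v) - gradient f u, v⟫ := by
        rw [inner_sub_left, hc]
      rw [this]
      nlinarith [hip, sq_nonneg ‖v‖, ht.1.le]
  have h01 := hanti (Set.mem_Icc.2 ⟨le_refl 0, zero_le_one⟩) (Set.mem_Icc.2 ⟨zero_le_one, le_refl 1⟩) zero_le_one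
  have hφ0 : φ 0 = f u := by simp [hφdef]
  have hφ1 : φ 1 = f (u + v) - c - L / 2 * ‖v‖ ^ 2 := by simp [hφdef]
  rw [hφ0, hφ1] at h01
  linarith

lemma residual_lipschitz (f h : E → ℝ) (δ : ℝ)
    (hf : ContDiff ℝ 2 f) (hh : ContDiff ℝ 2 h)
    (hsim : ∀ x, ‖iteratedFDeriv ℝ 2 f x - iteratedFDeriv ℝ 2 h x‖ ≤ δ) (u v : E) :
    ‖gradient f u - gradient h u - (gradient f v - gradient h v)‖ ≤ δ * ‖u - v‖ := by
  set p : E → ℝ := fun z => f z - h z with hp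
  have hpc : ContDiff ℝ 2 p := hf.sub hh
  have hfd : Differentiable ℝ f := hf.differentiable (by norm_num)
  have hhd : Differentiable ℝ h := hh.differentiable (by norm_num)
  have hgradp : ∀ z, gradient f z - gradient h z = gradient p z := by
    intro z
    rw [gradient, gradient, gradient, ← map_sub]
    congr 1
    rw [hp, fderiv_fun_sub (hfd z) (hhd z)]
  have hiFD : ∀ z, iteratedFDeriv ℝ 2 p z = iteratedFDeriv ℝ 2 f z - iteratedFDeriv ℝ 2 h z := by
    intro z
    have : p = f + (-h) := by funext w; simp [hp]; ring
    rw [this, iteratedFDeriv_add_apply hf.contDiffAt (by exact hh.neg.contDiffAt), iteratedFDeriv_neg_apply]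
    abel
  have hG : ∀ z, DifferentiableAt ℝ (fderiv ℝ p) z := by
    have : ContDiff ℝ 1 (fderiv ℝ p) := hpc.fderiv_right (by norm_num)
    exact fun z => (this.differentiable (by norm_num)) z
  have hbound : ∀ z : E, ‖fderiv ℝ (fderiv ℝ p) z‖ ≤ δ := by
    intro z
    have hδ0 : 0 ≤ δ := le_trans (norm_nonneg _) (hsim z)
    have key : ‖fderiv ℝ (fderiv ℝ p) z‖ ≤ ‖iteratedFDeriv ℝ 2 p z‖ := by
      refine ContinuousLinearMap.opNorm_le_bound (fderiv ℝ (fderiv ℝ p) z)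
        (norm_nonneg _) (fun w => ?_)
      refine ContinuousLinearMap.opNorm_le_bound (fderiv ℝ (fderiv ℝ p) z w)
        (mul_nonneg (norm_nonneg _) (norm_nonneg _)) (fun w' => ?_)
      have := iteratedFDeriv_two_apply (𝕜 := ℝ) p z ![w, w']
      simp only [Matrix.cons_val_zero, Matrix.cons_val_one, Matrix.head_cons] at this
      rw [← this]
      calc ‖iteratedFDeriv ℝ 2 p z ![w, w']‖
          ≤ ‖iteratedFDeriv ℝ 2 p z‖ * ∏ i : Fin 2, ‖![w, w'] i‖ :=
            (iteratedFDeriv ℝ 2 p z).le_opNorm _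
        _ = ‖iteratedFDeriv ℝ 2 p z‖ * ‖w‖ * ‖w'‖ := by
            rw [Fin.prod_univ_two]; simp [mul_assoc]
    rw [hiFD z] at key
    exact le_trans key (hsim z)
  have := convex_univ.norm_image_sub_le_of_norm_fderiv_le (f := fderiv ℝ p) (C := δ)
    (fun z _ => hG z) (fun z _ => hbound z) (Set.mem_univ v) (Set.mem_univ u)
  rw [hgradp, hgradp]
  have hnorm : ‖gradient p u - gradient p v‖ = ‖fderiv ℝ p u - fderiv ℝ p v‖ := by
    rw [gradient, gradient, ← map_sub, LinearIsometryEquiv.norm_map]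
  rw [hnorm]
  exact this

lemma step_ineq (f : E → ℝ) (L : ℝ) (hfd : Differentiable ℝ f)
    (hsmooth : ∀ x y : E, ‖gradient f x - gradient f y‖ ≤ L * ‖x - y‖)
    (η : ℝ) (hη0 : 0 < η) (hL : 0 ≤ L) (hηL : η * L ≤ 1) (u w : E) :
    f (u - η • w) ≤ f u - η / 2 * ‖gradient f u‖ ^ 2 + η / 2 * ‖w - gradient f u‖ ^ 2 := by
  have hd := descent_lemma f L hL hfd hsmooth u (-(η • w))
  rw [← sub_eq_add_neg] at hd
  have hip : ⟪gradient f u, -(η • w)⟫ = -(η * ⟪gradient f u, w⟫) := by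
    rw [inner_neg_right, real_inner_smul_right]
  rw [hip] at hd
  have hsq : ‖w - gradient f u‖ ^ 2
      = ‖w‖ ^ 2 - 2 * ⟪gradient f u, w⟫ + ‖gradient f u‖ ^ 2 := by
    rw [norm_sub_sq_real, real_inner_comm]; try ring
  have hnn : ‖-(η • w)‖ ^ 2 = η ^ 2 * ‖w‖ ^ 2 := by
    rw [norm_neg, norm_smul, Real.norm_eq_abs, abs_of_pos hη0, mul_pow]
  rw [hnn] at hd
  nlinarith [sq_nonneg ‖w‖, hη0, mul_le_mul_of_nonneg_right hηL (mul_nonneg (mul_nonneg hη0.le hη0.le) (sq_nonneg ‖w‖))]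

set_option maxHeartbeats 1000000 in
lemma round_analysis (f h : E → ℝ) (L δ η : ℝ) (hδ : 0 < δ) (hη0 : 0 < η)
    (hL : 0 ≤ L) (hηL : η * L ≤ 1)
    (hfd : Differentiable ℝ f)
    (hsmooth : ∀ x y : E, ‖gradient f x - gradient f y‖ ≤ L * ‖x - y‖)
    (hlip : ∀ u v : E, ‖gradient f u - gradient h u - (gradient f v - gradient h v)‖
      ≤ δ * ‖u - v‖)
    (K : ℕ) (hK : 1 ≤ K) (hq : η * δ * K ≤ 1 / 192)
    (mv : E) (z : ℕ → E)
    (hz : ∀ k, k < K → z (k + 1) = z k - η • (gradient h (z k) + mv)) :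
    f (z K) ≤ f (z 0)
        - η / 4 * ∑ k ∈ range K, ‖gradient f (z k)‖ ^ 2
        + 2 * η * K * ‖mv - (gradient f (z 0) - gradient h (z 0))‖ ^ 2
      ∧ ‖z K - z 0‖ ^ 2 ≤ 8 * η ^ 2 * K *
        ((∑ k ∈ range K, ‖gradient f (z k)‖ ^ 2)
          + K * ‖mv - (gradient f (z 0) - gradient h (z 0))‖ ^ 2) := by
  set S : ℝ := ‖mv - (gradient f (z 0) - gradient h (z 0))‖ with hSdef
  set GS : ℝ := ∑ k ∈ range K, ‖gradient f (z k)‖ ^ 2 with hGSdef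
  have hS0 : 0 ≤ S := norm_nonneg _
  have hGS0 : 0 ≤ GS := Finset.sum_nonneg fun j _ => sq_nonneg _
  have hKpos : (0:ℝ) < K := by exact_mod_cast hK
  have hq0 : 0 ≤ η * δ * (K:ℝ) := by positivity
  -- bias bound at any point
  have hbias : ∀ k : ℕ, ‖mv - (gradient f (z k) - gradient h (z k))‖ ≤ S + δ * ‖z k - z 0‖ := by
    intro k
    calc ‖mv - (gradient f (z k) - gradient h (z k))‖
        ≤ ‖mv - (gradient f (z 0) - gradient h (z 0))‖
          + ‖(gradient f (z 0) - gradient h (z 0)) - (gradient f (z k) - gradient h (z k))‖ := by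
          have heq : mv - (gradient f (z k) - gradient h (z k))
              = (mv - (gradient f (z 0) - gradient h (z 0)))
                + ((gradient f (z 0) - gradient h (z 0))
                  - (gradient f (z k) - gradient h (z k))) := by abel
          rw [heq]; exact norm_add_le _ _
      _ ≤ S + δ * ‖z k - z 0‖ := by
          gcongr
          calc ‖(gradient f (z 0) - gradient h (z 0)) - (gradient f (z k) - gradient h (z k))‖
              ≤ δ * ‖z 0 - z k‖ := hlip (z 0) (z k)
            _ = δ * ‖z k - z 0‖ := by rw [norm_sub_rev]
  -- drift bound with growing coefficient
  have hdrift : ∀ k, k ≤ K → ‖z k - z 0‖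
      ≤ (1 + 2 * k * (η * δ)) * (η * ∑ j ∈ range k, (‖gradient f (z j)‖ + S)) := by
    intro k
    induction k with
    | zero => intro _; simp
    | succ k ih =>
      intro hk1
      have hkK : k < K := by omega
      have ihk := ih (by omega)
      have hrec := hz k hkK
      have hw : ‖gradient h (z k) + mv‖
          ≤ ‖gradient f (z k)‖ + (S + δ * ‖z k - z 0‖) := by
        have heq : gradient h (z k) + mv
            = gradient f (z k) + (mv - (gradient f (z k) - gradient h (z k))) := by abel
        rw [heq]
        exact le_trans (norm_add_le _ _) (by gcongr; exact hbias k)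
      have hstep : ‖z (k+1) - z 0‖ ≤ ‖z k - z 0‖ + η * ‖gradient h (z k) + mv‖ := by
        have heq : z (k+1) - z 0 = (z k - z 0) - η • (gradient h (z k) + mv) := by
          rw [hrec]; abel
        rw [heq]
        refine le_trans (norm_sub_le _ _) ?_
        rw [norm_smul, Real.norm_eq_abs, abs_of_pos hη0]
      have hsum : (∑ j ∈ range (k+1), (‖gradient f (z j)‖ + S))
          = (∑ j ∈ range k, (‖gradient f (z j)‖ + S)) + (‖gradient f (z k)‖ + S) :=
        Finset.sum_range_succ _ _
      have hX0 : 0 ≤ ∑ j ∈ range k, (‖gradient f (z j)‖ + S) :=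
        Finset.sum_nonneg fun j _ => add_nonneg (norm_nonneg _) hS0
      have hkq : (k:ℝ) * (η * δ) ≤ 1 / 192 := by
        have h1 : (k:ℝ) ≤ K := Nat.cast_le.2 hkK.le
        have h2 : (k:ℝ) * (η * δ) ≤ (K:ℝ) * (η * δ) :=
          mul_le_mul_of_nonneg_right h1 (by positivity)
        calc (k:ℝ) * (η * δ) ≤ (K:ℝ) * (η * δ) := h2
          _ = η * δ * K := by ring
          _ ≤ 1 / 192 := hq
      have hcast : ((k+1 : ℕ) : ℝ) = (k : ℝ) + 1 := by push_cast; ring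
      rw [hcast, hsum]
      have hηδ : 0 ≤ η * δ := by positivity
      have hGkS : 0 ≤ ‖gradient f (z k)‖ + S := add_nonneg (norm_nonneg _) hS0
      have hA : 0 ≤ (η * δ) * (η * ∑ j ∈ range k, (‖gradient f (z j)‖ + S)) :=
        mul_nonneg hηδ (mul_nonneg hη0.le hX0)
      have hB : (η * δ) * (η * ∑ j ∈ range k, (‖gradient f (z j)‖ + S)) * ((k:ℝ) * (η * δ))
          ≤ (η * δ) * (η * ∑ j ∈ range k, (‖gradient f (z j)‖ + S)) * (1/192) :=
        mul_le_mul_of_nonneg_left hkq hA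
      have hC : 0 ≤ ((k:ℝ)+1) * ((η * δ) * (η * (‖gradient f (z k)‖ + S))) := by positivity
      calc ‖z (k+1) - z 0‖ ≤ ‖z k - z 0‖ + η * ‖gradient h (z k) + mv‖ := hstep
        _ ≤ ‖z k - z 0‖ + η * (‖gradient f (z k)‖ + (S + δ * ‖z k - z 0‖)) := by gcongr
        _ = (1 + η * δ) * ‖z k - z 0‖ + η * (‖gradient f (z k)‖ + S) := by ring
        _ ≤ (1 + η * δ) * ((1 + 2 * k * (η * δ))
              * (η * ∑ j ∈ range k, (‖gradient f (z j)‖ + S)))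
            + η * (‖gradient f (z k)‖ + S) := by gcongr
        _ ≤ (1 + 2 * ((k:ℝ) + 1) * (η * δ))
            * (η * ((∑ j ∈ range k, (‖gradient f (z j)‖ + S))
              + (‖gradient f (z k)‖ + S))) := by nlinarith [hA, hB, hC]
  -- uniform drift bound
  set Dm : ℝ := 2 * η * ∑ j ∈ range K, (‖gradient f (z j)‖ + S) with hDmdef
  have hDm0 : 0 ≤ Dm := by
    have h0 : 0 ≤ ∑ j ∈ range K, (‖gradient f (z j)‖ + S) :=
      Finset.sum_nonneg fun j _ => add_nonneg (norm_nonneg _) hS0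
    positivity
  have hDbd : ∀ k, k ≤ K → ‖z k - z 0‖ ≤ Dm := by
    intro k hk
    refine le_trans (hdrift k hk) ?_
    have h1 : (1 + 2 * (k:ℝ) * (η * δ)) ≤ 2 := by
      have hkq : (k:ℝ) * (η * δ) ≤ 1/192 := by
        have ha1 : (k:ℝ) ≤ K := Nat.cast_le.2 hk
        have ha2 : (k:ℝ) * (η * δ) ≤ (K:ℝ) * (η * δ) :=
          mul_le_mul_of_nonneg_right ha1 (by positivity)
        calc (k:ℝ) * (η * δ) ≤ (K:ℝ) * (η * δ) := ha2
          _ = η * δ * K := by ring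
          _ ≤ 1 / 192 := hq
      linarith
    have h2 : (∑ j ∈ range k, (‖gradient f (z j)‖ + S))
        ≤ ∑ j ∈ range K, (‖gradient f (z j)‖ + S) := by
      apply Finset.sum_le_sum_of_subset_of_nonneg (Finset.range_subset_range.2 hk)
      intro j _ _; exact add_nonneg (norm_nonneg _) hS0
    have h3 : 0 ≤ ∑ j ∈ range k, (‖gradient f (z j)‖ + S) :=
      Finset.sum_nonneg fun j _ => add_nonneg (norm_nonneg _) hS0
    calc (1 + 2 * (k:ℝ) * (η * δ)) * (η * ∑ j ∈ range k, (‖gradient f (z j)‖ + S))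
        ≤ 2 * (η * ∑ j ∈ range K, (‖gradient f (z j)‖ + S)) := by
          apply mul_le_mul h1 (by gcongr) (by positivity) (by norm_num)
      _ = Dm := by rw [hDmdef]; ring
  -- square bound on Dm
  have hDm2 : Dm ^ 2 ≤ 8 * η ^ 2 * K * (GS + K * S ^ 2) := by
    have hcs : (∑ j ∈ range K, (‖gradient f (z j)‖ + S)) ^ 2
        ≤ (K : ℝ) * ∑ j ∈ range K, (‖gradient f (z j)‖ + S) ^ 2 := by
      have hcs0 := sq_sum_le_card_mul_sum_sq (s := range K)
        (f := fun j => ‖gradient f (z j)‖ + S)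
      simpa using hcs0
    have hterm : (∑ j ∈ range K, (‖gradient f (z j)‖ + S) ^ 2)
        ≤ 2 * GS + 2 * K * S ^ 2 := by
      have hptw : ∀ j ∈ range K, (‖gradient f (z j)‖ + S) ^ 2
          ≤ 2 * ‖gradient f (z j)‖ ^ 2 + 2 * S ^ 2 := by
        intro j _; nlinarith [sq_nonneg (‖gradient f (z j)‖ - S)]
      calc (∑ j ∈ range K, (‖gradient f (z j)‖ + S) ^ 2)
          ≤ ∑ j ∈ range K, (2 * ‖gradient f (z j)‖ ^ 2 + 2 * S ^ 2) :=
            Finset.sum_le_sum hptw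
        _ = 2 * GS + 2 * K * S ^ 2 := by
            rw [Finset.sum_add_distrib, ← Finset.mul_sum, Finset.sum_const, Finset.card_range,
              hGSdef]
            push_cast; ring
    have h4 : (∑ j ∈ range K, (‖gradient f (z j)‖ + S)) ^ 2
        ≤ (K:ℝ) * (2 * GS + 2 * K * S ^ 2) :=
      le_trans hcs (mul_le_mul_of_nonneg_left hterm hKpos.le)
    calc Dm ^ 2 = 4 * η ^ 2 * (∑ j ∈ range K, (‖gradient f (z j)‖ + S)) ^ 2 := by
          rw [hDmdef]; ring
      _ ≤ 4 * η ^ 2 * ((K:ℝ) * (2 * GS + 2 * K * S ^ 2)) :=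
          mul_le_mul_of_nonneg_left h4 (by positivity)
      _ = 8 * η ^ 2 * K * (GS + K * S ^ 2) := by ring
  constructor
  · -- descent over the round
    have hP : ∀ k, k ≤ K → f (z k) + η / 2 * ∑ j ∈ range k, ‖gradient f (z j)‖ ^ 2
        ≤ f (z 0) + k * (η * S ^ 2 + η * δ ^ 2 * Dm ^ 2) := by
      intro k
      induction k with
      | zero => intro _; simp
      | succ k ih =>
        intro hk1
        have hkK : k < K := by omega
        have ihk := ih (by omega)
        have hrec := hz k hkK
        have hs := step_ineq f L hfd hsmooth η hη0 hL hηL (z k) (gradient h (z k) + mv)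
        rw [← hrec] at hs
        have hb : ‖(gradient h (z k) + mv) - gradient f (z k)‖ ≤ S + δ * Dm := by
          have heq : (gradient h (z k) + mv) - gradient f (z k)
              = mv - (gradient f (z k) - gradient h (z k)) := by abel
          rw [heq]
          refine le_trans (hbias k) ?_
          gcongr
          exact hDbd k hkK.le
        have hb2 : ‖(gradient h (z k) + mv) - gradient f (z k)‖ ^ 2
            ≤ 2 * S ^ 2 + 2 * δ ^ 2 * Dm ^ 2 := by
          have hb1 : ‖(gradient h (z k) + mv) - gradient f (z k)‖ ^ 2 ≤ (S + δ * Dm) ^ 2 :=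
            pow_le_pow_left₀ (norm_nonneg _) hb 2
          nlinarith [sq_nonneg (S - δ * Dm)]
        have hsum : (∑ j ∈ range (k+1), ‖gradient f (z j)‖ ^ 2)
            = (∑ j ∈ range k, ‖gradient f (z j)‖ ^ 2) + ‖gradient f (z k)‖ ^ 2 :=
          Finset.sum_range_succ _ _
        rw [hsum]
        have hcast : ((k+1 : ℕ) : ℝ) = (k : ℝ) + 1 := by push_cast; ring
        rw [hcast]
        have hstep2 : f (z (k+1)) ≤ f (z k) - η / 2 * ‖gradient f (z k)‖ ^ 2
            + η / 2 * (2 * S ^ 2 + 2 * δ ^ 2 * Dm ^ 2) := by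
          refine le_trans hs ?_
          gcongr
        linarith
    have hPK := hP K le_rfl
    have hKC : (K:ℝ) * (η * S ^ 2 + η * δ ^ 2 * Dm ^ 2)
        ≤ η / 4 * GS + 2 * η * (K:ℝ) * S ^ 2 := by
      have h1 : (K:ℝ) * (η * δ ^ 2 * Dm ^ 2)
          ≤ 8 * η * (η * δ * K) ^ 2 * (GS + K * S ^ 2) := by
        calc (K:ℝ) * (η * δ ^ 2 * Dm ^ 2)
            ≤ (K:ℝ) * (η * δ ^ 2 * (8 * η ^ 2 * K * (GS + K * S ^ 2))) := by
              refine mul_le_mul_of_nonneg_left ?_ hKpos.le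
              exact mul_le_mul_of_nonneg_left hDm2 (by positivity)
          _ = 8 * η * (η * δ * K) ^ 2 * (GS + K * S ^ 2) := by ring
      have h2 : 8 * η * (η * δ * K) ^ 2 * (GS + K * S ^ 2)
          ≤ 8 * (1/192)^2 * (η * GS + η * ((K:ℝ) * S ^ 2)) := by
        have hq2 : (η * δ * (K:ℝ))^2 ≤ (1/192)^2 := pow_le_pow_left₀ hq0 hq 2
        have hng : 0 ≤ η * GS + η * ((K:ℝ) * S^2) := by positivity
        calc 8 * η * (η * δ * K) ^ 2 * (GS + K * S ^ 2)
            = 8 * (η * δ * (K:ℝ))^2 * (η * GS + η * ((K:ℝ) * S ^ 2)) := by ring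
          _ ≤ 8 * (1/192)^2 * (η * GS + η * ((K:ℝ) * S ^ 2)) := by
              refine mul_le_mul_of_nonneg_right ?_ hng
              linarith [hq2]
      nlinarith [h1, h2, mul_nonneg hη0.le hGS0,
        mul_nonneg hη0.le (mul_nonneg hKpos.le (sq_nonneg S))]
    linarith [hPK, hKC]
  · -- movement bound
    have h1 : ‖z K - z 0‖ ≤ Dm := hDbd K le_rfl
    have h2 : ‖z K - z 0‖ ^ 2 ≤ Dm ^ 2 := pow_le_pow_left₀ (norm_nonneg _) h1 2
    exact le_trans h2 hDm2

end AUX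

open Finset

set_option maxHeartbeats 1000000 in
/-- convergence of the AuxMOM algorithm in the noiseless regime. -/
theorem stmt_12 {d : ℕ} (f h : EuclideanSpace ℝ (Fin d) → ℝ) (L δ fstar : ℝ)
    (hL : 0 < L) (hδ : 0 < δ)
    (hfd : Differentiable ℝ f)
    (hsmooth : ∀ x y : EuclideanSpace ℝ (Fin d),
      ‖gradient f x - gradient f y‖ ≤ L * ‖x - y‖)
    (hfbdd : ∀ x, fstar ≤ f x)
    (hf : ContDiff ℝ 2 f) (hh : ContDiff ℝ 2 h)
    (hsim : ∀ x, ‖iteratedFDeriv ℝ 2 f x - iteratedFDeriv ℝ 2 h x‖ ≤ δ)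
    (K T : ℕ) (hK : 1 ≤ K) (hT : 1 ≤ T)
    (η a : ℝ) (hη : η = min (1 / L) (1 / (192 * δ * K))) (ha : a = 36 * δ * K * η)
    (x : ℕ → EuclideanSpace ℝ (Fin d))
    (m : ℕ → EuclideanSpace ℝ (Fin d))
    (y : ℕ → ℕ → EuclideanSpace ℝ (Fin d))
    (hm : ∀ t, 1 ≤ t → t ≤ T →
      m t = (1 - a) • m (t - 1) + a • (gradient f (x (t - 1)) - gradient h (x (t - 1))))
    (hy0 : ∀ t, 1 ≤ t → t ≤ T → y t 0 = x (t - 1))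
    (hyk : ∀ t, 1 ≤ t → t ≤ T → ∀ k, 1 ≤ k → k ≤ K →
      y t k = y t (k - 1) - η • (gradient h (y t (k - 1)) + m t))
    (hx : ∀ t, 1 ≤ t → t ≤ T → x t = y t K)
    (Ftil : ℝ)
    (hFtil : Ftil = f (x 0) - fstar
      + ‖m 0 - gradient f (x 0) + gradient h (x 0)‖ ^ 2 / (8 * δ)) :
    (1 / (8 * K * T)) *
        ∑ t ∈ Finset.Icc 1 T, ∑ k ∈ Finset.range K, ‖gradient f (y t k)‖ ^ 2
      ≤ (L + 192 * δ * K) * Ftil / (K * T) := by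
  -- basic numeric facts
  have hKpos : (0:ℝ) < K := by exact_mod_cast hK
  have hTpos : (0:ℝ) < T := by exact_mod_cast hT
  have hc192 : (0:ℝ) < 192 * δ * K := by positivity
  have hη0 : 0 < η := by
    rw [hη]; exact lt_min (by positivity) (by positivity)
  have hηL : η * L ≤ 1 := by
    have h1 : η ≤ 1 / L := hη ▸ min_le_left _ _
    calc η * L ≤ (1 / L) * L := mul_le_mul_of_nonneg_right h1 hL.le
      _ = 1 := by field_simp
  have hq : η * δ * (K:ℝ) ≤ 1 / 192 := by
    have h1 : η ≤ 1 / (192 * δ * K) := hη ▸ min_le_right _ _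
    have h2 : η * (δ * K) ≤ (1 / (192 * δ * K)) * (δ * K) :=
      mul_le_mul_of_nonneg_right h1 (by positivity)
    have h3 : (1 / (192 * δ * (K:ℝ))) * (δ * K) = 1 / 192 := by
      field_simp
    calc η * δ * (K:ℝ) = η * (δ * K) := by ring
      _ ≤ 1 / 192 := by rw [← h3]; exact h2
  have ha0 : 0 < a := by rw [ha]; positivity
  have ha1 : a ≤ 3 / 16 := by
    have : 36 * (η * δ * (K:ℝ)) ≤ 36 * (1/192) := by linarith
    calc a = 36 * (η * δ * (K:ℝ)) := by rw [ha]; ring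
      _ ≤ 36 * (1/192) := this
      _ = 3 / 16 := by norm_num
  have hane : a ≠ 0 := ne_of_gt ha0
  have hδne : δ ≠ 0 := ne_of_gt hδ
  have hηne : η ≠ 0 := ne_of_gt hη0
  have hKne : (K:ℝ) ≠ 0 := ne_of_gt hKpos
  -- residual gradient Lipschitz
  have hlip := residual_lipschitz f h δ hf hh hsim
  -- abbreviations
  set S : ℕ → ℝ := fun s => ‖m s - (gradient f (x (s-1)) - gradient h (x (s-1)))‖ with hSdef
  set GS : ℕ → ℝ := fun s => ∑ k ∈ range K, ‖gradient f (y s k)‖ ^ 2 with hGSdef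
  have hS0 : ∀ s, 0 ≤ S s := fun s => norm_nonneg _
  have hGS0 : ∀ s, 0 ≤ GS s := fun s => Finset.sum_nonneg fun _ _ => sq_nonneg _
  -- per-round conclusions
  have hround : ∀ t, 1 ≤ t → t ≤ T →
      (f (x t) ≤ f (x (t-1)) - η / 4 * GS t + 2 * η * K * (S t) ^ 2
        ∧ ‖x t - x (t-1)‖ ^ 2 ≤ 8 * η ^ 2 * K * (GS t + K * (S t) ^ 2)) := by
    intro t ht1 htT
    have hz : ∀ k, k < K → y t (k+1) = y t k - η • (gradient h (y t k) + m t) := by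
      intro k hk
      have := hyk t ht1 htT (k+1) (by omega) (by omega)
      simpa using this
    have hr := round_analysis f h L δ η hδ hη0 hL.le hηL hfd hsmooth hlip K hK hq (m t) (y t) hz
    rw [← hx t ht1 htT, hy0 t ht1 htT] at hr
    exact hr
  have hdesc : ∀ t, 1 ≤ t → t ≤ T →
      f (x t) ≤ f (x (t-1)) - η / 4 * GS t + 2 * η * K * (S t) ^ 2 :=
    fun t ht1 htT => (hround t ht1 htT).1
  have hmove : ∀ t, 1 ≤ t → t ≤ T →
      ‖x t - x (t-1)‖ ^ 2 ≤ 8 * η ^ 2 * K * (GS t + K * (S t) ^ 2) :=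
    fun t ht1 htT => (hround t ht1 htT).2
  -- momentum contraction
  have hScontr : ∀ t, 1 ≤ t → t ≤ T →
      S t = (1 - a) * ‖m (t-1) - (gradient f (x (t-1)) - gradient h (x (t-1)))‖ := by
    intro t ht1 htT
    have heq : m t - (gradient f (x (t-1)) - gradient h (x (t-1)))
        = (1 - a) • (m (t-1) - (gradient f (x (t-1)) - gradient h (x (t-1)))) := by
      rw [hm t ht1 htT]; module
    have : S t = ‖(1 - a) • (m (t-1) - (gradient f (x (t-1)) - gradient h (x (t-1))))‖ := by
      rw [hSdef]; simp only []; rw [heq]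
    rw [this, norm_smul, Real.norm_eq_abs, abs_of_nonneg (by linarith : (0:ℝ) ≤ 1 - a)]
  have hR4a : (S 1) ^ 2 ≤ (1 - a/2) * (S 0) ^ 2 := by
    have h1 := hScontr 1 le_rfl hT
    have h2 : S 1 = (1 - a) * S 0 := by rw [h1]
    have hax : a * (a * (S 0) ^ 2) ≤ (3/16) * (a * (S 0) ^ 2) :=
      mul_le_mul_of_nonneg_right ha1 (mul_nonneg ha0.le (sq_nonneg _))
    rw [h2]
    have hexp : ((1 - a) * S 0) ^ 2
        = (S 0) ^ 2 - 2 * (a * (S 0) ^ 2) + a * (a * (S 0) ^ 2) := by ring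
    rw [hexp]
    have h0 : 0 ≤ a * (S 0) ^ 2 := mul_nonneg ha0.le (sq_nonneg _)
    linarith [hax, h0]
  have hR4b : ∀ t, 2 ≤ t → t ≤ T →
      (S t) ^ 2 ≤ (1 - a/2) * (S (t-1)) ^ 2 + (2 * δ * η / 3) * GS (t-1) := by
    intro t ht2 htT
    have ht1 : 1 ≤ t := by omega
    have htm1 : 1 ≤ t - 1 := by omega
    have htm2 : t - 1 ≤ T := by omega
    set u : ℝ := S (t-1) with hudef
    set D : ℝ := ‖x (t-1) - x (t-1-1)‖ with hDdef
    have hu0 : 0 ≤ u := hS0 _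
    have hD0 : 0 ≤ D := norm_nonneg _
    have hGt0 : 0 ≤ GS (t-1) := hGS0 _
    have hDD : D ^ 2 ≤ 8 * η ^ 2 * K * (GS (t-1) + K * u ^ 2) := hmove (t-1) htm1 htm2
    -- S t ≤ (1-a) u + δ D
    have hSt : S t ≤ (1 - a) * u + δ * D := by
      rw [hScontr t ht1 htT]
      have htri : ‖m (t-1) - (gradient f (x (t-1)) - gradient h (x (t-1)))‖
          ≤ u + δ * D := by
        have hsplit : m (t-1) - (gradient f (x (t-1)) - gradient h (x (t-1)))
            = (m (t-1) - (gradient f (x (t-1-1)) - gradient h (x (t-1-1))))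
              + ((gradient f (x (t-1-1)) - gradient h (x (t-1-1)))
                - (gradient f (x (t-1)) - gradient h (x (t-1)))) := by abel
        calc ‖m (t-1) - (gradient f (x (t-1)) - gradient h (x (t-1)))‖
            ≤ ‖m (t-1) - (gradient f (x (t-1-1)) - gradient h (x (t-1-1)))‖
              + ‖(gradient f (x (t-1-1)) - gradient h (x (t-1-1)))
                - (gradient f (x (t-1)) - gradient h (x (t-1)))‖ := by
              rw [hsplit]; exact norm_add_le _ _
          _ ≤ u + δ * D := by
              gcongr
              calc ‖(gradient f (x (t-1-1)) - gradient h (x (t-1-1)))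
                    - (gradient f (x (t-1)) - gradient h (x (t-1)))‖
                    ≤ δ * ‖x (t-1-1) - x (t-1)‖ := hlip _ _
                  _ = δ * D := by rw [hDdef, norm_sub_rev]
      calc (1 - a) * ‖m (t-1) - (gradient f (x (t-1)) - gradient h (x (t-1)))‖
          ≤ (1 - a) * (u + δ * D) := by
            apply mul_le_mul_of_nonneg_left htri (by linarith)
        _ ≤ (1 - a) * u + δ * D := by nlinarith [mul_nonneg hδ.le hD0]
    have hSq : (S t) ^ 2 ≤ ((1 - a) * u + δ * D) ^ 2 :=
      pow_le_pow_left₀ (hS0 t) hSt 2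
    -- AM-GM with epsilon = 18 q, q = δ η K
    set q : ℝ := δ * η * (K:ℝ) with hqdef
    have hq0 : 0 < q := by rw [hqdef]; positivity
    have hq192 : q ≤ 1 / 192 := by
      calc q = η * δ * (K:ℝ) := by rw [hqdef]; ring
        _ ≤ 1 / 192 := hq
    have haq : a = 36 * q := by rw [ha, hqdef]; ring
    have h18q : (0:ℝ) < 18 * q := by linarith
    have hAM : 2 * ((1 - a) * u) * (δ * D)
        ≤ 18 * q * ((1 - a) * u) ^ 2 + (δ * D) ^ 2 / (18 * q) := by
      have hsq := sq_nonneg (18 * q * ((1 - a) * u) - δ * D)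
      have hdiv : 2 * ((1 - a) * u) * (δ * D) - 18 * q * ((1 - a) * u) ^ 2
          ≤ (δ * D) ^ 2 / (18 * q) := by
        rw [le_div_iff₀ h18q]
        nlinarith [hsq]

      linarith
    -- bound D^2 terms
    have hD2 : (δ * D) ^ 2 ≤ 8 * δ * η * q * GS (t-1) + 8 * q ^ 2 * u ^ 2 := by
      have := mul_le_mul_of_nonneg_left hDD (sq_nonneg δ)
      calc (δ * D) ^ 2 = δ ^ 2 * D ^ 2 := by ring
        _ ≤ δ ^ 2 * (8 * η ^ 2 * K * (GS (t-1) + K * u ^ 2)) := this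
        _ = 8 * δ * η * q * GS (t-1) + 8 * q ^ 2 * u ^ 2 := by rw [hqdef]; ring
    have hD2div : (δ * D) ^ 2 / (18 * q)
        ≤ (4/9) * δ * η * GS (t-1) + (4/9) * q * u ^ 2 := by
      have h1 : (δ * D) ^ 2 / (18 * q)
          ≤ (8 * δ * η * q * GS (t-1) + 8 * q ^ 2 * u ^ 2) / (18 * q) := by
        gcongr
      have h2 : (8 * δ * η * q * GS (t-1) + 8 * q ^ 2 * u ^ 2) / (18 * q)
          = (4/9) * δ * η * GS (t-1) + (4/9) * q * u ^ 2 := by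
        field_simp
        ring
      rw [← h2]; exact h1
    -- combine
    have hcomb : ((1 - a) * u + δ * D) ^ 2
        ≤ (1 + 18 * q) * ((1 - a) * u) ^ 2 + (4/9) * δ * η * GS (t-1) + (4/9) * q * u ^ 2
          + 8 * δ * η * q * GS (t-1) + 8 * q ^ 2 * u ^ 2 := by
      have hexp : ((1 - a) * u + δ * D) ^ 2
          = ((1 - a) * u) ^ 2 + 2 * ((1 - a) * u) * (δ * D) + (δ * D) ^ 2 := by ring
      rw [hexp]
      linarith [hAM, hD2div, hD2]
    -- final polynomial arithmetic
    have hGSb : q * (δ * η * GS (t-1)) ≤ (1/192) * (δ * η * GS (t-1)) :=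
      mul_le_mul_of_nonneg_right hq192
        (mul_nonneg (mul_nonneg hδ.le hη0.le) hGt0)
    have hqu : 0 ≤ q * u ^ 2 := mul_nonneg hq0.le (sq_nonneg u)
    have hq2u : q ^ 2 * u ^ 2 ≤ (1/192) * (q * u ^ 2) := by
      calc q ^ 2 * u ^ 2 = q * (q * u ^ 2) := by ring
        _ ≤ (1/192) * (q * u ^ 2) := mul_le_mul_of_nonneg_right hq192 hqu
    have hq3u : q ^ 3 * u ^ 2 ≤ (1/192) * (q ^ 2 * u ^ 2) := by
      calc q ^ 3 * u ^ 2 = q * (q ^ 2 * u ^ 2) := by ring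
        _ ≤ (1/192) * (q ^ 2 * u ^ 2) :=
            mul_le_mul_of_nonneg_right hq192 (mul_nonneg (sq_nonneg q) (sq_nonneg u))
    rw [haq] at hSq hcomb ⊢
    have hq3u' : q ^ 3 * u ^ 2 ≤ (1/192) * ((1/192) * (q * u ^ 2)) := by
      calc q ^ 3 * u ^ 2 ≤ (1/192) * (q ^ 2 * u ^ 2) := hq3u
        _ ≤ (1/192) * ((1/192) * (q * u ^ 2)) := by
            have := mul_le_mul_of_nonneg_left hq2u (by norm_num : (0:ℝ) ≤ 1/192)
            linarith
    have hdhGS : 0 ≤ δ * η * GS (t-1) :=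
      mul_nonneg (mul_nonneg hδ.le hη0.le) hGt0
    have hX2 : (1 + 18 * q) * ((1 - 36 * q) * u) ^ 2
        = u ^ 2 - 54 * (q * u ^ 2) + 23328 * (q ^ 3 * u ^ 2) := by ring
    have hfinal : (1 + 18 * q) * ((1 - 36 * q) * u) ^ 2
          + (4/9) * δ * η * GS (t-1) + (4/9) * (q * u ^ 2)
          + 8 * (q * (δ * η * GS (t-1))) + 8 * (q ^ 2 * u ^ 2)
        ≤ (1 - 36 * q / 2) * u ^ 2 + 2 * δ * η / 3 * GS (t-1) := by
      rw [hX2]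
      linarith [hq2u, hq3u', hqu, hGSb, hdhGS]
    calc (S t) ^ 2 ≤ ((1 - 36 * q) * u + δ * D) ^ 2 := hSq
      _ ≤ (1 + 18 * q) * ((1 - 36 * q) * u) ^ 2 + (4/9) * δ * η * GS (t-1)
          + (4/9) * q * u ^ 2 + 8 * δ * η * q * GS (t-1) + 8 * q ^ 2 * u ^ 2 := hcomb
      _ = (1 + 18 * q) * ((1 - 36 * q) * u) ^ 2 + (4/9) * δ * η * GS (t-1)
          + (4/9) * (q * u ^ 2) + 8 * (q * (δ * η * GS (t-1))) + 8 * (q ^ 2 * u ^ 2) := by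
          ring
      _ ≤ (1 - 36 * q / 2) * u ^ 2 + 2 * δ * η / 3 * GS (t-1) := hfinal
  -- summed descent
  have hI1 : ∀ n, n ≤ T → f (x n) + η / 4 * (∑ s ∈ Icc 1 n, GS s)
      ≤ f (x 0) + 2 * η * K * (∑ s ∈ Icc 1 n, (S s) ^ 2) := by
    intro n
    induction n with
    | zero => intro _; simp
    | succ n ih =>
      intro hn1
      have ihn := ih (by omega)
      have hd := hdesc (n+1) (by omega) hn1
      have hsum1 : (∑ s ∈ Icc 1 (n+1), GS s) = (∑ s ∈ Icc 1 n, GS s) + GS (n+1) :=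
        Finset.sum_Icc_succ_top (by omega) _
      have hsum2 : (∑ s ∈ Icc 1 (n+1), (S s) ^ 2)
          = (∑ s ∈ Icc 1 n, (S s) ^ 2) + (S (n+1)) ^ 2 :=
        Finset.sum_Icc_succ_top (by omega) _
      have hn0 : (n+1) - 1 = n := by omega
      rw [hn0] at hd
      rw [hsum1, hsum2]
      linarith
  -- summed momentum recursion
  have hI2 : ∀ n, n ≤ T → a / 2 * (∑ s ∈ Icc 1 n, (S s) ^ 2) + (S n) ^ 2
      ≤ (S 0) ^ 2 + δ * η * (∑ s ∈ Icc 1 (n-1), GS s) := by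
    intro n
    induction n with
    | zero => intro _; simp
    | succ n ih =>
      intro hn1
      have ihn := ih (by omega)
      have hsum2 : (∑ s ∈ Icc 1 (n+1), (S s) ^ 2)
          = (∑ s ∈ Icc 1 n, (S s) ^ 2) + (S (n+1)) ^ 2 :=
        Finset.sum_Icc_succ_top (by omega) _
      rw [hsum2]
      rcases Nat.eq_zero_or_pos n with hn0 | hnpos
      · subst hn0
        simp only [Nat.add_sub_cancel]
        have h1 : (S 1) ^ 2 ≤ (1 - a/2) * (S 0) ^ 2 := hR4a
        simp only [Finset.Icc_self, Finset.sum_singleton, Finset.Icc_eq_empty_of_lt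
          (by norm_num : (1:ℕ) > 0), Finset.sum_empty] at *
        have h0 : 0 ≤ (S 1) ^ 2 := sq_nonneg _
        have h2 : a / 2 * (S 1) ^ 2 ≤ a / 2 * ((1 - a/2) * (S 0) ^ 2) :=
          mul_le_mul_of_nonneg_left h1 (by linarith)
        have h3 : a / 2 * ((1 - a/2) * (S 0) ^ 2) + (1 - a/2) * (S 0) ^ 2 ≤ (S 0) ^ 2 := by
          have hexp : a / 2 * ((1 - a/2) * (S 0) ^ 2) + (1 - a/2) * (S 0) ^ 2
              = (S 0) ^ 2 - (a * a / 4) * (S 0) ^ 2 := by ring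
          rw [hexp]
          have : 0 ≤ (a * a / 4) * (S 0) ^ 2 :=
            mul_nonneg (by positivity) (sq_nonneg _)
          linarith
        linarith
      · have hb := hR4b (n+1) (by omega) hn1
        have hn0 : (n+1) - 1 = n := by omega
        rw [hn0] at hb ⊢
        have hsum1 : (∑ s ∈ Icc 1 n, GS s) = (∑ s ∈ Icc 1 (n-1), GS s) + GS n := by
          have : n - 1 + 1 = n := by omega
          rw [← this, Finset.sum_Icc_succ_top (by omega)]
          rw [this]
        rw [hsum1]
        have hkey : (1 + a/2) * (S (n+1)) ^ 2 ≤ (S n) ^ 2 + δ * η * GS n := by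
          have h2 : (1 + a/2) * (S (n+1)) ^ 2
              ≤ (1 + a/2) * ((1 - a/2) * (S n) ^ 2 + (2 * δ * η / 3) * GS n) := by
            apply mul_le_mul_of_nonneg_left hb (by linarith)
          have h3 : (1 + a/2) * ((1 - a/2) * (S n) ^ 2 + (2 * δ * η / 3) * GS n)
              ≤ (S n) ^ 2 + δ * η * GS n := by
            have hGn : 0 ≤ δ * η * GS n := mul_nonneg (mul_nonneg hδ.le hη0.le) (hGS0 n)
            have haGS : a * (δ * η * GS n) ≤ 1 * (δ * η * GS n) :=
              mul_le_mul_of_nonneg_right (by linarith) hGn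
            have hexp : (1 + a/2) * ((1 - a/2) * (S n) ^ 2 + (2 * δ * η / 3) * GS n)
                = (S n) ^ 2 - (a * a / 4) * (S n) ^ 2 + (2/3) * (δ * η * GS n)
                  + (1/3) * (a * (δ * η * GS n)) := by ring
            rw [hexp]
            have h4 : 0 ≤ (a * a / 4) * (S n) ^ 2 :=
              mul_nonneg (by positivity) (sq_nonneg _)
            linarith
          linarith
        linarith
  -- assemble
  set A : ℝ := ∑ s ∈ Icc 1 T, GS s with hAdef
  set B : ℝ := ∑ s ∈ Icc 1 T, (S s) ^ 2 with hBdef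
  have hA0 : 0 ≤ A := Finset.sum_nonneg fun s _ => hGS0 s
  have hB0 : 0 ≤ B := Finset.sum_nonneg fun s _ => sq_nonneg _
  have hI1T := hI1 T le_rfl
  have hI2T := hI2 T le_rfl
  have hsub : (∑ s ∈ Icc 1 (T-1), GS s) ≤ A := by
    rw [hAdef]
    apply Finset.sum_le_sum_of_subset_of_nonneg
    · apply Finset.Icc_subset_Icc_right; omega
    · intro s _ _; exact hGS0 s
  have haB : a / 2 * B ≤ (S 0) ^ 2 + δ * η * A := by
    have h1 : δ * η * (∑ s ∈ Icc 1 (T-1), GS s) ≤ δ * η * A :=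
      mul_le_mul_of_nonneg_left hsub (by positivity)
    linarith [hI2T, h1, sq_nonneg (S T)]
  have hcoef : 2 * η * (K:ℝ) * B ≤ (1/(9*δ)) * (S 0) ^ 2 + (η/9) * A := by
    have h2 := mul_le_mul_of_nonneg_left haB (show (0:ℝ) ≤ 4*η*K/a by positivity)
    calc 2 * η * (K:ℝ) * B = (4*η*K/a) * (a/2 * B) := by field_simp; ring
      _ ≤ (4*η*K/a) * ((S 0) ^ 2 + δ * η * A) := h2
      _ = (1/(9*δ)) * (S 0) ^ 2 + (η/9) * A := by rw [ha]; field_simp; ring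
  have hfb : fstar ≤ f (x T) := hfbdd _
  have hmain : η / 8 * A ≤ f (x 0) - fstar + (1/(8*δ)) * (S 0) ^ 2 := by
    have h1 : η / 4 * A ≤ f (x 0) - fstar + (1/(9*δ)) * (S 0) ^ 2 + (η/9) * A := by
      linarith [hI1T, hcoef, hfb]
    have h2 : (1/(9*δ)) * (S 0) ^ 2 ≤ (1/(8*δ)) * (S 0) ^ 2 := by
      apply mul_le_mul_of_nonneg_right _ (sq_nonneg _)
      rw [div_le_div_iff₀ (by positivity) (by positivity)]
      linarith
    have h3 : η / 8 * A ≤ η / 4 * A - (η/9) * A := by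
      have : 0 ≤ η * A := mul_nonneg hη0.le hA0
      linarith
    linarith
  -- identify Ftil
  have hvec : m 0 - gradient f (x 0) + gradient h (x 0)
      = m 0 - (gradient f (x (0-1)) - gradient h (x (0-1))) := by
    norm_num; abel
  have hFt : Ftil = f (x 0) - fstar + (S 0) ^ 2 / (8 * δ) := by
    rw [hFtil, hvec]
  have hFtil0 : 0 ≤ Ftil := by
    rw [hFt]
    have := hfbdd (x 0)
    have : (0:ℝ) ≤ (S 0) ^ 2 / (8 * δ) := by positivity
    linarith [hfbdd (x 0)]
  have hηA : η / 8 * A ≤ Ftil := by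
    rw [hFt]
    have : (1/(8*δ)) * (S 0) ^ 2 = (S 0) ^ 2 / (8*δ) := by ring
    linarith [hmain, this.le, this.ge]
  -- inverse stepsize bound
  have hinv : 1 / η ≤ L + 192 * δ * K := by
    rw [hη]
    rcases min_cases (1 / L) (1 / (192 * δ * K)) with ⟨heq, _⟩ | ⟨heq, _⟩ <;> rw [heq]
    · rw [one_div_one_div]
      nlinarith [hc192]
    · rw [one_div_one_div]
      linarith
  -- final chain
  have h8 : A ≤ 8 * Ftil / η := by
    rw [le_div_iff₀ hη0]
    have hexp : A * η = 8 * (η / 8 * A) := by ring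
    rw [hexp]
    linarith [hηA]
  have hstep1 : (1 / (8 * (K:ℝ) * T)) * A ≤ (1 / (8 * (K:ℝ) * T)) * (8 * Ftil / η) :=
    mul_le_mul_of_nonneg_left h8 (by positivity)
  have hstep2 : (1 / (8 * (K:ℝ) * T)) * (8 * Ftil / η) = (1/η * Ftil) / ((K:ℝ) * T) := by
    field_simp
  have hstep3 : (1/η * Ftil) / ((K:ℝ) * T) ≤ ((L + 192 * δ * K) * Ftil) / ((K:ℝ) * T) := by
    apply div_le_div_of_nonneg_right _ (by positivity) |>.trans_eq rfl
    exact mul_le_mul_of_nonneg_right hinv hFtil0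
  calc (1 / (8 * (K:ℝ) * T)) * A ≤ (1 / (8 * (K:ℝ) * T)) * (8 * Ftil / η) := hstep1
    _ = (1/η * Ftil) / ((K:ℝ) * T) := hstep2
    _ ≤ ((L + 192 * δ * K) * Ftil) / ((K:ℝ) * T) := hstep3
end

section
/- Let f : ℝ^d → ℝ be L-smooth and bounded below by f*, and let f, h be twice continuously differentiable and satisfy δ-Hessian similarity (δ ≥ 0). Fix integers K ≥ 1 and T ≥ 1, and set η = min(1/L, 1/(192δK)) (η = 1/L when δ = 0). Given x⁰ ∈ ℝ^d, define for t = 1,…,T: y^t_0 = x^{t−1}; y^t_k = y^t_{k−1} − η(∇h(y^t_{k−1}) − ∇h(x^{t−1}) + ∇f(x^{t−1})) for k = 1,…,K; and x^t = y^t_K. Then (1/(KT)) Σ_{t=1}^T Σ_{k=0}^{K−1} ‖∇f(y^t_k)‖² ≤ 4(L + 192δK)(f(x⁰) − f*)/(KT). -/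
open Finset

section Aux

variable {E : Type*} [NormedAddCommGroup E] [InnerProductSpace ℝ E] [CompleteSpace E]

local notation "⟪" x ", " y "⟫" => @inner ℝ _ _ x y

lemma inner_gradient_eq (f : E → ℝ) (z v : E) : ⟪gradient f z, v⟫ = fderiv ℝ f z v := by
  rw [gradient, InnerProductSpace.toDual_symm_apply]

lemma descent_aux {f : E → ℝ} {L : ℝ} (hL : 0 ≤ L) (hfd : Differentiable ℝ f)
    (hsm : ∀ p q : E, ‖gradient f p - gradient f q‖ ≤ L * ‖p - q‖) (a b : E) :
    f b ≤ f a + ⟪gradient f a, b - a⟫ + L / 2 * ‖b - a‖ ^ 2 := by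
  set v := b - a with hv
  set ψ : ℝ → ℝ := fun s => f (a + s • v) - s * ⟪gradient f a, v⟫ - L / 2 * s ^ 2 * ‖v‖ ^ 2
    with hψ
  have hline : ∀ s : ℝ, HasDerivAt (fun s : ℝ => a + s • v) v s := by
    intro s
    simpa using ((hasDerivAt_id s).smul_const v).const_add a
  have hD : ∀ s : ℝ, HasDerivAt ψ
      (⟪gradient f (a + s • v), v⟫ - ⟪gradient f a, v⟫ - L * s * ‖v‖ ^ 2) s := by
    intro s
    have h1 : HasDerivAt (fun s : ℝ => f (a + s • v)) (fderiv ℝ f (a + s • v) v) s :=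
      (hfd (a + s • v)).hasFDerivAt.comp_hasDerivAt s (hline s)
    have h2 : HasDerivAt (fun s : ℝ => s * ⟪gradient f a, v⟫) ⟪gradient f a, v⟫ s := by
      simpa using (hasDerivAt_id s).mul_const ⟪gradient f a, v⟫
    have h3 : HasDerivAt (fun s : ℝ => L / 2 * s ^ 2 * ‖v‖ ^ 2) (L * s * ‖v‖ ^ 2) s := by
      have := ((hasDerivAt_pow 2 s).const_mul (L / 2)).mul_const (‖v‖ ^ 2)
      refine this.congr_deriv ?_
      push_cast
      ring
    have := (h1.sub h2).sub h3
    rw [inner_gradient_eq]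
    exact this
  have hmono : AntitoneOn ψ (Set.Icc (0:ℝ) 1) := by
    apply antitoneOn_of_deriv_nonpos (convex_Icc 0 1)
    · exact fun s _ => ((hD s).differentiableAt).continuousAt.continuousWithinAt
    · exact fun s _ => ((hD s).differentiableAt).differentiableWithinAt
    · intro s hs
      rw [interior_Icc] at hs
      rw [(hD s).deriv]
      have hs0 : 0 ≤ s := le_of_lt hs.1
      have key : ⟪gradient f (a + s • v) - gradient f a, v⟫ ≤ L * s * ‖v‖ ^ 2 := by
        calc ⟪gradient f (a + s • v) - gradient f a, v⟫
            ≤ ‖gradient f (a + s • v) - gradient f a‖ * ‖v‖ := real_inner_le_norm _ _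
          _ ≤ (L * ‖(a + s • v) - a‖) * ‖v‖ := by
              gcongr
              exact hsm _ _
          _ = L * s * ‖v‖ ^ 2 := by
              rw [add_sub_cancel_left, norm_smul]
              simp [abs_of_nonneg hs0]
              ring
      rw [inner_sub_left] at key
      linarith
  have h01 := hmono (Set.mem_Icc.2 ⟨le_rfl, zero_le_one⟩) (Set.mem_Icc.2 ⟨zero_le_one, le_rfl⟩)
    zero_le_one
  simp only [hψ, zero_smul, add_zero, one_smul, zero_mul, zero_pow, mul_zero, sub_zero,
    one_mul, one_pow, mul_one] at h01
  have hab : a + v = b := by rw [hv]; abel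
  rw [hab] at h01
  linarith

lemma grad_diff_lip {f h : E → ℝ} {δ : ℝ} (hf : ContDiff ℝ 2 f) (hh : ContDiff ℝ 2 h)
    (hsim : ∀ x, ‖iteratedFDeriv ℝ 2 f x - iteratedFDeriv ℝ 2 h x‖ ≤ δ) (a b : E) :
    ‖(gradient h a - gradient h b) - (gradient f a - gradient f b)‖ ≤ δ * ‖a - b‖ := by
  set φ : E → ℝ := fun z => h z - f z with hφdef
  have hφ : ContDiff ℝ 2 φ := hh.sub hf
  have hdh : Differentiable ℝ h := hh.differentiable (by norm_num)
  have hdf : Differentiable ℝ f := hf.differentiable (by norm_num)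
  have hsub2 : ∀ z : E, iteratedFDeriv ℝ 2 φ z
      = iteratedFDeriv ℝ 2 h z - iteratedFDeriv ℝ 2 f z := by
    intro z
    have e : iteratedFDeriv ℝ 2 (fun x => h x + -f x) z
        = iteratedFDeriv ℝ 2 h z + iteratedFDeriv ℝ 2 (fun x => -f x) z :=
      iteratedFDeriv_add_apply' hh.contDiffAt hf.neg.contDiffAt
    have e2 : iteratedFDeriv ℝ 2 (fun x => -f x) z = - iteratedFDeriv ℝ 2 f z :=
      iteratedFDeriv_neg_apply
    have e3 : φ = fun x => h x + -f x := by funext w; simp [hφdef, sub_eq_add_neg]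
    rw [e3, e, e2, sub_eq_add_neg]
  have hbound : ∀ z : E, ‖fderiv ℝ (fderiv ℝ φ) z‖ ≤ δ := by
    intro z
    have e0 : ‖fderiv ℝ (fderiv ℝ φ) z‖
        = ‖iteratedFDeriv ℝ 0 (fderiv ℝ (fderiv ℝ φ)) z‖ := (norm_iteratedFDeriv_zero (f := fderiv ℝ (fderiv ℝ φ)) (x := z)).symm
    have e1 : ‖iteratedFDeriv ℝ 0 (fderiv ℝ (fderiv ℝ φ)) z‖
        = ‖iteratedFDeriv ℝ 1 (fderiv ℝ φ) z‖ := norm_iteratedFDeriv_fderiv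
    have e2 : ‖iteratedFDeriv ℝ 1 (fderiv ℝ φ) z‖ = ‖iteratedFDeriv ℝ 2 φ z‖ :=
      norm_iteratedFDeriv_fderiv
    rw [e0, e1, e2, hsub2 z, ← norm_neg, neg_sub]
    exact hsim z
  have hdiff : ∀ z : E, DifferentiableAt ℝ (fderiv ℝ φ) z := by
    have : ContDiff ℝ 1 (fderiv ℝ φ) := hφ.fderiv_right (by norm_num)
    exact fun z => (this.differentiable (by norm_num)) z
  have hmv : ‖fderiv ℝ φ a - fderiv ℝ φ b‖ ≤ δ * ‖a - b‖ := by
    have := Convex.norm_image_sub_le_of_norm_fderiv_le (f := fderiv ℝ φ) (s := Set.univ)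
      (fun z _ => hdiff z) (fun z _ => hbound z) convex_univ (Set.mem_univ b) (Set.mem_univ a)
    simpa using this
  have hkey : (gradient h a - gradient h b) - (gradient f a - gradient f b)
      = (InnerProductSpace.toDual ℝ E).symm (fderiv ℝ φ a - fderiv ℝ φ b) := by
    have hfd : ∀ z : E, fderiv ℝ φ z = fderiv ℝ h z - fderiv ℝ f z := fun z =>
      fderiv_sub (hdh z) (hdf z)
    simp only [gradient, hfd, map_sub]
    abel
  rw [hkey, LinearIsometryEquiv.norm_map]
  exact hmv

set_option maxHeartbeats 2000000 in
lemma round_bound {f h : E → ℝ} {L δ η : ℝ} (hL : 0 < L) (hδ : 0 ≤ δ) (hηpos : 0 < η)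
    (hηL : η * L ≤ 1) (hfd : Differentiable ℝ f)
    (hsm : ∀ p q : E, ‖gradient f p - gradient f q‖ ≤ L * ‖p - q‖)
    (hlip : ∀ a b : E,
      ‖(gradient h a - gradient h b) - (gradient f a - gradient f b)‖ ≤ δ * ‖a - b‖)
    (K : ℕ) (hηδK : η * (δ * K) ≤ 1 / 192)
    (z : ℕ → E)
    (hz : ∀ k < K, z (k + 1)
      = z k - η • (gradient h (z k) - gradient h (z 0) + gradient f (z 0))) :
    ∑ k ∈ range K, ‖gradient f (z k)‖ ^ 2 ≤ 4 / η * (f (z 0) - f (z K)) := by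
  set S : ℝ := ∑ k ∈ range K, ‖gradient f (z k)‖ ^ 2 with hS
  have hSnn : 0 ≤ S := Finset.sum_nonneg fun k _ => by positivity
  -- error bound
  have herr : ∀ k : ℕ,
      ‖(gradient h (z k) - gradient h (z 0) + gradient f (z 0)) - gradient f (z k)‖
        ≤ δ * ‖z k - z 0‖ := by
    intro k
    have h1 := hlip (z k) (z 0)
    have h2 : (gradient h (z k) - gradient h (z 0) + gradient f (z 0)) - gradient f (z k)
        = (gradient h (z k) - gradient h (z 0))
          - (gradient f (z k) - gradient f (z 0)) := by abel
    rw [h2]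
    exact h1
  -- one-step descent
  have step1 : ∀ k < K,
      f (z (k + 1)) ≤ f (z k) - η / 2 * ‖gradient f (z k)‖ ^ 2
        + η / 2 * (δ * ‖z k - z 0‖) ^ 2 := by
    intro k hk
    set G : E := gradient h (z k) - gradient h (z 0) + gradient f (z 0) with hG
    set Fk : E := gradient f (z k) with hFk
    have hd := descent_aux hL.le hfd hsm (z k) (z (k + 1))
    have hdiffz : z (k + 1) - z k = -(η • G) := by
      rw [hz k hk]; abel
    rw [hdiffz, ← hFk] at hd
    have hin : ⟪Fk, -(η • G)⟫ = -(η * ⟪Fk, G⟫) := by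
      rw [inner_neg_right, real_inner_smul_right]
    rw [hin] at hd
    have hnrm : ‖-(η • G)‖ ^ 2 = η ^ 2 * ‖G‖ ^ 2 := by
      rw [norm_neg, norm_smul]
      simp [abs_of_nonneg hηpos.le, mul_pow]
    rw [hnrm] at hd
    have hLη : L / 2 * (η ^ 2 * ‖G‖ ^ 2) ≤ η / 2 * ‖G‖ ^ 2 := by
      nlinarith [sq_nonneg ‖G‖, hηpos]
    have hexp : ‖G - Fk‖ ^ 2 = ‖G‖ ^ 2 - 2 * ⟪G, Fk⟫ + ‖Fk‖ ^ 2 :=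
      norm_sub_sq_real _ _
    have hcomm : ⟪Fk, G⟫ = ⟪G, Fk⟫ := real_inner_comm _ _
    have hesq : ‖G - Fk‖ ^ 2 ≤ (δ * ‖z k - z 0‖) ^ 2 := by
      have h1 : ‖G - Fk‖ ≤ δ * ‖z k - z 0‖ := herr k
      have h2 : (0:ℝ) ≤ ‖G - Fk‖ := norm_nonneg _
      nlinarith
    nlinarith
  -- drift recursion
  have step2 : ∀ k < K, ‖z (k + 1) - z 0‖
      ≤ (1 + η * δ) * ‖z k - z 0‖ + η * ‖gradient f (z k)‖ := by
    intro k hk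
    set G : E := gradient h (z k) - gradient h (z 0) + gradient f (z 0) with hG
    set Fk : E := gradient f (z k) with hFk
    have h1 : z (k + 1) - z 0 = (z k - z 0) - η • G := by
      rw [hz k hk]; abel
    have h2 : ‖G‖ ≤ ‖Fk‖ + δ * ‖z k - z 0‖ := by
      have h3 : G = Fk + (G - Fk) := by abel
      calc ‖G‖ = ‖Fk + (G - Fk)‖ := by rw [← h3]
        _ ≤ ‖Fk‖ + ‖G - Fk‖ := norm_add_le _ _
        _ ≤ ‖Fk‖ + δ * ‖z k - z 0‖ := by linarith [herr k]
    calc ‖z (k + 1) - z 0‖ = ‖(z k - z 0) - η • G‖ := by rw [h1]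
      _ ≤ ‖z k - z 0‖ + ‖η • G‖ := norm_sub_le _ _
      _ = ‖z k - z 0‖ + η * ‖G‖ := by
          rw [norm_smul, Real.norm_eq_abs, abs_of_nonneg hηpos.le]
      _ ≤ ‖z k - z 0‖ + η * (‖Fk‖ + δ * ‖z k - z 0‖) := by
          have := mul_le_mul_of_nonneg_left h2 hηpos.le
          linarith
      _ = (1 + η * δ) * ‖z k - z 0‖ + η * ‖Fk‖ := by ring
  -- drift bound by induction
  have hbase : 1 ≤ 1 + η * δ := by nlinarith
  have step3 : ∀ k ≤ K, ‖z k - z 0‖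
      ≤ (1 + η * δ) ^ k * (η * ∑ j ∈ range k, ‖gradient f (z j)‖) := by
    intro k hk
    induction k with
    | zero => simp
    | succ n ih =>
      have hn : n ≤ K := Nat.le_of_succ_le hk
      have hnK : n < K := hk
      have ihn := ih hn
      have h2 := step2 n hnK
      have hpow1 : (1:ℝ) ≤ (1 + η * δ) ^ (n + 1) := one_le_pow₀ hbase
      have hpnn : (0:ℝ) ≤ (1 + η * δ) ^ n := by positivity
      rw [Finset.sum_range_succ]
      set A : ℝ := ∑ j ∈ range n, ‖gradient f (z j)‖ with hA
      have hsnn : 0 ≤ A := Finset.sum_nonneg fun j _ => norm_nonneg _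
      have hFnn : (0:ℝ) ≤ ‖gradient f (z n)‖ := norm_nonneg _
      have hpow_succ : (1 + η * δ) ^ (n + 1) = (1 + η * δ) * (1 + η * δ) ^ n := by ring
      have c1 : ‖z (n + 1) - z 0‖ ≤ (1 + η * δ) * ((1 + η * δ) ^ n * (η * A))
          + η * ‖gradient f (z n)‖ := by
        have := mul_le_mul_of_nonneg_left ihn (by linarith : (0:ℝ) ≤ 1 + η * δ)
        linarith
      have c2 : (1 + η * δ) * ((1 + η * δ) ^ n * (η * A)) + η * ‖gradient f (z n)‖
          ≤ (1 + η * δ) ^ (n + 1) * (η * (A + ‖gradient f (z n)‖)) := by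
        rw [hpow_succ]
        nlinarith [mul_nonneg hηpos.le hFnn]
      linarith
  -- cap the geometric factor by 3
  have hcap : (1 + η * δ) ^ K ≤ 3 := by
    have hx : 0 ≤ η * δ := mul_nonneg hηpos.le hδ
    have h1 : (1 + η * δ) ≤ Real.exp (η * δ) := by
      have := Real.add_one_le_exp (η * δ)
      linarith
    have h2 : (1 + η * δ) ^ K ≤ Real.exp (η * δ) ^ K :=
      pow_le_pow_left₀ (by linarith) h1 K
    have h3 : Real.exp (η * δ) ^ K = Real.exp (K * (η * δ)) := by
      rw [← Real.exp_nat_mul]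
    have h4 : (K:ℝ) * (η * δ) ≤ 1 := by nlinarith
    have h5 : Real.exp ((K:ℝ) * (η * δ)) ≤ Real.exp 1 := Real.exp_le_exp.2 h4
    have h6 : Real.exp 1 ≤ 3 := by
      have := Real.exp_one_lt_d9
      linarith
    calc (1 + η * δ) ^ K ≤ Real.exp (η * δ) ^ K := h2
      _ = Real.exp ((K:ℝ) * (η * δ)) := h3
      _ ≤ 3 := le_trans h5 h6
  -- squared drift bound
  have step4 : ∀ k < K, (δ * ‖z k - z 0‖) ^ 2 ≤ 9 * η ^ 2 * δ ^ 2 * K * S := by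
    intro k hk
    set A : ℝ := ∑ j ∈ range k, ‖gradient f (z j)‖ with hA
    have hsnn : 0 ≤ A := Finset.sum_nonneg fun j _ => norm_nonneg _
    have h3 : ‖z k - z 0‖ ≤ 3 * (η * A) := by
      have hst := step3 k hk.le
      have hpk : (1 + η * δ) ^ k ≤ 3 := by
        calc (1 + η * δ) ^ k ≤ (1 + η * δ) ^ K := pow_le_pow_right₀ hbase hk.le
          _ ≤ 3 := hcap
      have hsnn2 : 0 ≤ η * A := mul_nonneg hηpos.le hsnn
      nlinarith
    have hCS : A ^ 2 ≤ (k:ℝ) * ∑ j ∈ range k, ‖gradient f (z j)‖ ^ 2 := by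
      have hcs := sq_sum_le_card_mul_sum_sq (s := range k)
        (f := fun j => ‖gradient f (z j)‖)
      rw [Finset.card_range] at hcs
      exact hcs
    have hsub : ∑ j ∈ range k, ‖gradient f (z j)‖ ^ 2 ≤ S := by
      rw [hS]
      apply Finset.sum_le_sum_of_subset_of_nonneg (Finset.range_subset_range.2 hk.le)
      intro j _ _; positivity
    have hkKr : (k:ℝ) ≤ (K:ℝ) := by exact_mod_cast hk.le
    have hknn : (0:ℝ) ≤ (k:ℝ) := Nat.cast_nonneg k
    have hpsnn : 0 ≤ ∑ j ∈ range k, ‖gradient f (z j)‖ ^ 2 :=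
      Finset.sum_nonneg fun j _ => by positivity
    have h1 : A ^ 2 ≤ (K:ℝ) * S :=
      le_trans hCS (mul_le_mul hkKr hsub hpsnn (le_trans hknn hkKr))
    have hrknn : (0:ℝ) ≤ ‖z k - z 0‖ := norm_nonneg _
    have hr2 : ‖z k - z 0‖ ^ 2 ≤ 9 * η ^ 2 * A ^ 2 := by
      nlinarith [mul_nonneg hηpos.le hsnn]
    nlinarith [mul_le_mul_of_nonneg_left hr2 (sq_nonneg δ),
      mul_le_mul_of_nonneg_left h1
        (mul_nonneg (by positivity : (0:ℝ) ≤ 9 * η ^ 2) (sq_nonneg δ))]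
  -- telescoping
  have tele : f (z K) - f (z 0) = ∑ k ∈ range K, (f (z (k + 1)) - f (z k)) :=
    (Finset.sum_range_sub (fun k => f (z k)) K).symm
  have hsum1 : ∑ k ∈ range K, (f (z (k + 1)) - f (z k))
      ≤ ∑ k ∈ range K, (- (η / 2) * ‖gradient f (z k)‖ ^ 2
          + η / 2 * (δ * ‖z k - z 0‖) ^ 2) := by
    apply Finset.sum_le_sum
    intro k hk
    have := step1 k (Finset.mem_range.1 hk)
    linarith
  have hsum2 : ∑ k ∈ range K, (- (η / 2) * ‖gradient f (z k)‖ ^ 2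
          + η / 2 * (δ * ‖z k - z 0‖) ^ 2)
      = - (η / 2) * S + η / 2 * ∑ k ∈ range K, (δ * ‖z k - z 0‖) ^ 2 := by
    rw [Finset.sum_add_distrib, ← Finset.mul_sum, ← Finset.mul_sum, hS]
  have hsum3 : ∑ k ∈ range K, (δ * ‖z k - z 0‖) ^ 2
      ≤ (K:ℝ) * (9 * η ^ 2 * δ ^ 2 * K * S) := by
    calc ∑ k ∈ range K, (δ * ‖z k - z 0‖) ^ 2
        ≤ ∑ _k ∈ range K, (9 * η ^ 2 * δ ^ 2 * K * S) :=
          Finset.sum_le_sum fun k hk => step4 k (Finset.mem_range.1 hk)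
      _ = (K:ℝ) * (9 * η ^ 2 * δ ^ 2 * K * S) := by
          rw [Finset.sum_const, Finset.card_range, nsmul_eq_mul]
  have hsmall : (K:ℝ) * (9 * η ^ 2 * δ ^ 2 * K * S) ≤ S / 2 := by
    have h1 : (η * (δ * K)) ^ 2 ≤ (1/192) ^ 2 := by
      have hnn : 0 ≤ η * (δ * K) := by positivity
      nlinarith
    have h2 : (K:ℝ) * (9 * η ^ 2 * δ ^ 2 * K * S) = 9 * (η * (δ * K)) ^ 2 * S := by ring
    rw [h2]
    nlinarith
  have key : f (z K) - f (z 0) ≤ - (η / 4) * S := by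
    have c := le_trans hsum1 (le_of_eq hsum2)
    rw [← tele] at c
    have : η / 2 * ∑ k ∈ range K, (δ * ‖z k - z 0‖) ^ 2 ≤ η / 2 * (S / 2) := by
      apply mul_le_mul_of_nonneg_left _ (by positivity)
      exact le_trans hsum3 hsmall
    nlinarith
  rw [div_mul_eq_mul_div, le_div_iff₀ hηpos]
  nlinarith

end Aux


/-- convergence of the exact bias-corrected (SVRG-like) local
update in the noiseless regime. When `δ = 0` the step size is `η = 1/L`,
encoded by taking `η = min (1/L) (1/(192δK))` with the convention that the
second argument is `1/0 = 0`... to stay faithful we state the choice of `η`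
by cases on `δ`. -/
theorem stmt_13 {d : ℕ} (f h : EuclideanSpace ℝ (Fin d) → ℝ) (L δ fstar : ℝ)
    (hL : 0 < L) (hδ : 0 ≤ δ)
    (hfd : Differentiable ℝ f)
    (hsmooth : ∀ x y : EuclideanSpace ℝ (Fin d),
      ‖gradient f x - gradient f y‖ ≤ L * ‖x - y‖)
    (hfbdd : ∀ x, fstar ≤ f x)
    (hf : ContDiff ℝ 2 f) (hh : ContDiff ℝ 2 h)
    (hsim : ∀ x, ‖iteratedFDeriv ℝ 2 f x - iteratedFDeriv ℝ 2 h x‖ ≤ δ)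
    (K T : ℕ) (hK : 1 ≤ K) (hT : 1 ≤ T)
    (η : ℝ)
    (hη : if δ = 0 then η = 1 / L else η = min (1 / L) (1 / (192 * δ * K)))
    (x : ℕ → EuclideanSpace ℝ (Fin d))
    (y : ℕ → ℕ → EuclideanSpace ℝ (Fin d))
    (hy0 : ∀ t, 1 ≤ t → t ≤ T → y t 0 = x (t - 1))
    (hyk : ∀ t, 1 ≤ t → t ≤ T → ∀ k, 1 ≤ k → k ≤ K →
      y t k = y t (k - 1) - η • (gradient h (y t (k - 1))
        - gradient h (x (t - 1)) + gradient f (x (t - 1))))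
    (hx : ∀ t, 1 ≤ t → t ≤ T → x t = y t K) :
    (1 / (K * T)) *
        ∑ t ∈ Finset.Icc 1 T, ∑ k ∈ Finset.range K, ‖gradient f (y t k)‖ ^ 2
      ≤ 4 * (L + 192 * δ * K) * (f (x 0) - fstar) / (K * T) := by
  have hlip : ∀ a b : EuclideanSpace ℝ (Fin d),
      ‖(gradient h a - gradient h b) - (gradient f a - gradient f b)‖ ≤ δ * ‖a - b‖ :=
    grad_diff_lip hf hh hsim
  have hK1 : (1:ℝ) ≤ (K:ℝ) := by exact_mod_cast hK
  have hT1 : (1:ℝ) ≤ (T:ℝ) := by exact_mod_cast hT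
  -- step-size facts
  have hηfacts : 0 < η ∧ η * L ≤ 1 ∧ η * (δ * K) ≤ 1 / 192 ∧ 1 / η ≤ L + 192 * δ * K := by
    by_cases hδ0 : δ = 0
    · rw [if_pos hδ0] at hη
      subst hδ0
      refine ⟨by rw [hη]; positivity, ?_, ?_, ?_⟩
      · rw [hη]; field_simp; norm_num
      · rw [hη]; simp
      · rw [hη]
        rw [one_div_one_div]
        nlinarith
    · rw [if_neg hδ0] at hη
      have hδpos : 0 < δ := lt_of_le_of_ne hδ (Ne.symm hδ0)
      have hbpos : 0 < 192 * δ * (K:ℝ) := by positivity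
      have hηpos : 0 < η := by
        rw [hη]
        exact lt_min (by positivity) (by positivity)
      refine ⟨hηpos, ?_, ?_, ?_⟩
      · have h1 : η ≤ 1 / L := by rw [hη]; exact min_le_left _ _
        calc η * L ≤ (1 / L) * L := by nlinarith
          _ = 1 := by field_simp
      · have h1 : η ≤ 1 / (192 * δ * K) := by rw [hη]; exact min_le_right _ _
        have hδK : 0 < δ * (K:ℝ) := by positivity
        calc η * (δ * K) ≤ (1 / (192 * δ * K)) * (δ * K) := by nlinarith
          _ = 1 / 192 := by field_simp
      · rcases min_cases (1 / L) (1 / (192 * δ * (K:ℝ))) with ⟨he, _⟩ | ⟨he, _⟩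
        · rw [hη, he, one_div_one_div]
          nlinarith
        · rw [hη, he, one_div_one_div]
          nlinarith
  obtain ⟨hηpos, hηL, hηδK, hηinv⟩ := hηfacts
  -- per-round bound
  have hround : ∀ t ∈ Finset.Icc 1 T, ∑ k ∈ range K, ‖gradient f (y t k)‖ ^ 2
      ≤ 4 / η * (f (x (t - 1)) - f (x t)) := by
    intro t ht
    obtain ⟨ht1, ht2⟩ := Finset.mem_Icc.1 ht
    have hz : ∀ k < K, y t (k + 1)
        = y t k - η • (gradient h (y t k) - gradient h (y t 0) + gradient f (y t 0)) := by
      intro k hk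
      have h1 := hyk t ht1 ht2 (k + 1) (Nat.succ_le_succ (Nat.zero_le k)) hk
      rw [Nat.add_sub_cancel] at h1
      rw [hy0 t ht1 ht2]
      exact h1
    have h2 := round_bound hL hδ hηpos hηL hfd hsmooth hlip K hηδK (y t) hz
    rw [hy0 t ht1 ht2, ← hx t ht1 ht2] at h2
    exact h2
  -- telescoping over rounds
  have hsumT : ∑ t ∈ Finset.Icc 1 T, ∑ k ∈ range K, ‖gradient f (y t k)‖ ^ 2
      ≤ 4 / η * (f (x 0) - fstar) := by
    calc ∑ t ∈ Finset.Icc 1 T, ∑ k ∈ range K, ‖gradient f (y t k)‖ ^ 2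
        ≤ ∑ t ∈ Finset.Icc 1 T, 4 / η * (f (x (t - 1)) - f (x t)) :=
          Finset.sum_le_sum hround
      _ = 4 / η * ∑ t ∈ Finset.Icc 1 T, (f (x (t - 1)) - f (x t)) := by
          rw [Finset.mul_sum]
      _ = 4 / η * (f (x 0) - f (x T)) := by
          congr 1
          rw [← Finset.Ico_add_one_right_eq_Icc, Finset.sum_Ico_eq_sum_range]
          have hTT : T + 1 - 1 = T := by omega
          rw [hTT]
          have : ∀ i ∈ range T, f (x (1 + i - 1)) - f (x (1 + i))
              = f (x i) - f (x (i + 1)) := by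
            intro i _
            have e1 : 1 + i - 1 = i := by omega
            have e2 : 1 + i = i + 1 := by omega
            rw [e1, e2]
          rw [Finset.sum_congr rfl this]
          exact Finset.sum_range_sub' (fun i => f (x i)) T
      _ ≤ 4 / η * (f (x 0) - fstar) := by
          apply mul_le_mul_of_nonneg_left _ (by positivity)
          linarith [hfbdd (x T)]
  have hΔ : 0 ≤ f (x 0) - fstar := by linarith [hfbdd (x 0)]
  have h4 : 4 / η * (f (x 0) - fstar) ≤ 4 * (L + 192 * δ * K) * (f (x 0) - fstar) := by
    apply mul_le_mul_of_nonneg_right _ hΔ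
    calc 4 / η = 4 * (1 / η) := by ring
      _ ≤ 4 * (L + 192 * δ * K) := by linarith
  have hKT : (0:ℝ) < (K:ℝ) * (T:ℝ) := by nlinarith
  calc (1 / ((K:ℝ) * T)) * ∑ t ∈ Finset.Icc 1 T, ∑ k ∈ range K, ‖gradient f (y t k)‖ ^ 2
      ≤ (1 / ((K:ℝ) * T)) * (4 / η * (f (x 0) - fstar)) := by
        apply mul_le_mul_of_nonneg_left hsumT (by positivity)
    _ ≤ (1 / ((K:ℝ) * T)) * (4 * (L + 192 * δ * K) * (f (x 0) - fstar)) := by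
        apply mul_le_mul_of_nonneg_left h4 (by positivity)
    _ = 4 * (L + 192 * δ * K) * (f (x 0) - fstar) / ((K:ℝ) * T) := by
        rw [one_div_mul_eq_div]
end
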